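/- arXiv:2202.10846 — 3 statements merged into one kernel-verified Lean document; each statement's English description precedes it below -/
import Mathlib

section
/- Let p be an odd prime, D a division ring of characteristic p, and K a subfield of D contained in the center of D. Suppose h, x ∈ D with x ≠ 0 and h*x = x*(h + 2), and suppose h is algebraic over K. Then the minimal polynomial of h over K has degree at least p. -/
open Polynomial

/-- Conjugation by a nonzero element is a `K`-algebra endomorphism of a
division ring `D` with central `K`. -/
noncomputable def conjAlgHom {K D : Type*} [Field K] [DivisionRing D] [Algebra K D]
    (x : D) (hx : x ≠ 0) : D →ₐ[K] D where
  toFun a := x⁻¹ * a * x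
  map_one' := by show x⁻¹ * 1 * x = 1; rw [mul_one, inv_mul_cancel₀ hx]
  map_mul' a b := by
    show x⁻¹ * (a * b) * x = x⁻¹ * a * x * (x⁻¹ * b * x)
    simp [mul_assoc, mul_inv_cancel_left₀ hx]
  map_zero' := by show x⁻¹ * 0 * x = 0; rw [mul_zero, zero_mul]
  map_add' a b := by
    show x⁻¹ * (a + b) * x = x⁻¹ * a * x + x⁻¹ * b * x
    rw [mul_add, add_mul]
  commutes' r := by
    show x⁻¹ * algebraMap K D r * x = algebraMap K D r
    rw [← Algebra.commutes r x⁻¹, mul_assoc, inv_mul_cancel₀ hx, mul_one]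

/-- Let `p` be an odd prime, `D` a division ring of characteristic `p`, and
`K` a central subfield of `D` (formalized as: `K` is a field with an algebra
structure on `D`, so that `K` maps into the center of `D`).  If `h, x ∈ D`
with `x ≠ 0` and `h*x = x*(h+2)`, and `h` is algebraic over `K`, then the
minimal polynomial of `h` over `K` has degree at least `p`. -/
theorem minpoly_degree_ge_of_shift_conjugate {K D : Type*} [Field K]
    [DivisionRing D] [Algebra K D] (p : ℕ) [CharP D p] (hp : p.Prime)
    (hodd : Odd p) (h x : D) (hx : x ≠ 0) (hshift : h * x = x * (h + 2))
    (halg : IsIntegral K h) :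
    p ≤ (minpoly K h).natDegree := by
  classical
  have hφh : (conjAlgHom (K := K) x hx) h = h + 2 := by
    show x⁻¹ * h * x = h + 2
    rw [mul_assoc, hshift, ← mul_assoc, inv_mul_cancel₀ hx, one_mul]
  -- every `h + 2k` is a root of the minimal polynomial of `h`
  have hroot : ∀ k : ℕ, aeval (h + 2 * k) (minpoly K h) = 0 := by
    intro k
    induction k with
    | zero =>
      simp only [Nat.cast_zero, mul_zero, add_zero]
      exact minpoly.aeval K h
    | succ n ih =>
      have h1 := congrArg (conjAlgHom (K := K) x hx) ih
      rw [← aeval_algHom_apply, map_zero, map_add, hφh, map_mul, map_natCast,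
        map_ofNat] at h1
      rw [Nat.cast_succ, show h + 2 * ((n : D) + 1) = h + 2 + 2 * (n : D) by rw [mul_add, mul_one, add_comm (2 * (n : D)) 2, ← add_assoc]]
      exact h1
  -- the commutative subalgebra generated by `h`
  set R := Algebra.adjoin K ({h} : Set D) with hR
  letI : CommRing R := Algebra.adjoinCommRingOfComm K (by rintro a rfl b rfl; rfl)
  letI : IsDomain R := Function.Injective.isDomain R.subtype Subtype.coe_injective
  have hmem : h ∈ R := Algebra.subset_adjoin rfl
  set h' : R := ⟨h, hmem⟩ with hh'
  set g : R[X] := (minpoly K h).map (algebraMap K R) with hg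
  have hg0 : g ≠ 0 := Polynomial.map_ne_zero (minpoly.ne_zero halg)
  -- each `h' + 2k` is a root of `g`
  have hroot' : ∀ k : ℕ, (h' + 2 * k) ∈ g.roots := by
    intro k
    rw [mem_roots hg0]
    have hcoe : ((h' + 2 * (k : R) : R) : D) = h + 2 * k := by
      push_cast
      rfl
    have h2 : aeval (((h' + 2 * (k : R)) : R) : D) (minpoly K h) = 0 := by
      rw [hcoe]; exact hroot k
    rw [← Polynomial.aeval_subalgebra_coe, Subalgebra.coe_eq_zero] at h2
    rw [IsRoot.def, hg, Polynomial.eval_map, ← Polynomial.aeval_def]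
    exact h2
  -- these roots are pairwise distinct for `k < p`
  have hinj : Set.InjOn (fun k : ℕ => h' + 2 * (k : R)) (Finset.range p) := by
    intro i hi j hj hij
    simp only [Finset.coe_range, Set.mem_Iio] at hi hj
    have h2 : (2 * (i : R) : R) = 2 * (j : R) := add_left_cancel hij
    have hD : ((2 * i : ℕ) : D) = ((2 * j : ℕ) : D) := by
      have h3 := congrArg R.subtype h2
      simp only [map_mul, map_natCast, map_ofNat] at h3
      push_cast
      exact h3
    have hmod : (2 * i) ≡ (2 * j) [MOD p] := by
      rwa [CharP.natCast_eq_natCast D p] at hD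
    have hcop : Nat.gcd p 2 = 1 := by
      have := (Nat.coprime_primes hp Nat.prime_two).mpr (by rintro rfl; simp [Nat.odd_iff] at hodd)
      exact this
    have hij' : i ≡ j [MOD p] := hmod.cancel_left_of_coprime hcop
    rwa [Nat.ModEq, Nat.mod_eq_of_lt hi, Nat.mod_eq_of_lt hj] at hij'
  have hcard : p ≤ Multiset.card g.roots := by
    have hsub : (Finset.range p).image (fun k : ℕ => h' + 2 * (k : R)) ⊆ g.roots.toFinset := by
      intro a ha
      rcases Finset.mem_image.mp ha with ⟨k, _, rfl⟩
      exact Multiset.mem_toFinset.mpr (hroot' k)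
    calc p = ((Finset.range p).image (fun k : ℕ => h' + 2 * (k : R))).card := by
              rw [Finset.card_image_of_injOn hinj, Finset.card_range]
      _ ≤ g.roots.toFinset.card := Finset.card_le_card hsub
      _ ≤ Multiset.card g.roots := g.roots.toFinset_card_le
  calc p ≤ Multiset.card g.roots := hcard
    _ ≤ g.natDegree := g.card_roots'
    _ = (minpoly K h).natDegree := by rw [hg]; exact natDegree_map _
end

section
/- Let F be a field of characteristic p > 0 and A a finite-dimensional associative unital F-algebra. Suppose there is an F-linear form t : A →ₗ[F] F such that t(u*v) = t(v*u) and t(u^p * v^p) = (t(u*v))^p for all u, v ∈ A, and such that the bilinear form (u,v) ↦ t(u*v) is nondegenerate (t(u*v) = 0 for all v implies u = 0). Then the Jacobson radical of A is trivial; equivalently, A is a semisimple ring. -/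
/-- Let `F` be a field of characteristic `p > 0` and `A` a finite-dimensional
associative unital `F`-algebra.  If there is a linear form `t : A →ₗ[F] F`
which is symmetric (`t (u*v) = t (v*u)`), compatible with `p`-th powers
(`t (uᵖ * vᵖ) = (t (u*v))ᵖ`) and whose trace form is nondegenerate, then the
Jacobson radical of `A` is trivial; equivalently, `A` is semisimple. -/
theorem semisimple_of_frobenius_compatible_trace_form {F A : Type*} [Field F]
    (p : ℕ) [CharP F p] (hp : 0 < p) [Ring A] [Algebra F A]
    [FiniteDimensional F A] (t : A →ₗ[F] F)
    (hsymm : ∀ u v : A, t (u * v) = t (v * u))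
    (hpow : ∀ u v : A, t (u ^ p * v ^ p) = (t (u * v)) ^ p)
    (hnondeg : ∀ u : A, (∀ v : A, t (u * v) = 0) → u = 0) :
    Ideal.jacobson (⊥ : Ideal A) = ⊥ ∧ IsSemisimpleRing A := by
  classical
  haveI : NeZero p := ⟨hp.ne'⟩
  have hp1 : 1 < p := (CharP.char_is_prime_of_pos F p).out.one_lt
  haveI : IsArtinian A A := isArtinian_of_tower F inferInstance
  -- traces are compatible with `p^k`-th powers
  have hpowk : ∀ (k : ℕ) (w : A), t (w ^ p ^ k) = t w ^ p ^ k := by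
    intro k
    induction k with
    | zero => simp
    | succ k ih =>
      intro w
      have h1 := hpow (w ^ p ^ k) 1
      simp only [one_pow, mul_one] at h1
      rw [pow_succ, pow_mul, h1, ih w, ← pow_mul, ← pow_succ]
  -- nilpotent elements have zero trace
  have htr0 : ∀ w : A, IsNilpotent w → t w = 0 := by
    rintro w ⟨n, hn⟩
    have hk : n ≤ p ^ n := le_of_lt (Nat.lt_pow_self (n := n) hp1)
    have hz : w ^ p ^ n = 0 := pow_eq_zero_of_le hk hn
    have : t w ^ p ^ n = 0 := by rw [← hpowk n w, hz, map_zero]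
    exact pow_eq_zero_iff (by positivity : p ^ n ≠ 0) |>.mp this
  -- every element of the Jacobson radical is nilpotent
  have hnil : ∀ x ∈ Ideal.jacobson (⊥ : Ideal A), IsNilpotent x := by
    intro x hx
    have hmono : ∀ n : ℕ, Submodule.span A {x ^ (n + 1)} ≤ Submodule.span A {x ^ n} := by
      intro n
      rw [Submodule.span_singleton_le_iff_mem, Submodule.mem_span_singleton]
      exact ⟨x, by rw [smul_eq_mul, ← pow_succ']⟩
    have hf : Monotone (fun n => OrderDual.toDual (Submodule.span A {x ^ n})) :=
      monotone_nat_of_le_succ fun n => OrderDual.toDual_le_toDual.mpr (hmono n)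
    obtain ⟨n, hn⟩ := IsArtinian.monotone_stabilizes
      ⟨fun n => OrderDual.toDual (Submodule.span A {x ^ n}), hf⟩
    have heq : Submodule.span A {x ^ n} = Submodule.span A {x ^ (n + 1)} :=
      OrderDual.toDual.injective (hn (n + 1) (Nat.le_succ n))
    have hmem : x ^ n ∈ Submodule.span A {x ^ (n + 1)} := by
      rw [← heq]; exact Submodule.mem_span_singleton_self _
    obtain ⟨a, ha⟩ := Submodule.mem_span_singleton.mp hmem
    have hax : a * x ∈ Ideal.jacobson (⊥ : Ideal A) := Ideal.mul_mem_left _ a hx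
    obtain ⟨z, hz⟩ := Ideal.mem_jacobson_iff.mp hax (-1)
    rw [Ideal.mem_bot] at hz
    have hzinv : z * (1 - a * x) = 1 := by
      have h' : -(z * (a * x)) + z - 1 = 0 := by rwa [mul_neg_one, neg_mul] at hz
      have h'' : -(z * (a * x)) + z = 1 := sub_eq_zero.mp h'
      rw [neg_add_eq_sub] at h''
      rw [mul_sub, mul_one]
      exact h''
    have hxn : (1 - a * x) * x ^ n = 0 := by
      have hxx : x ^ n = a * x * x ^ n := by
        conv_lhs => rw [← ha]
        rw [smul_eq_mul, pow_succ', mul_assoc]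
      rw [sub_mul, one_mul, ← hxx, sub_self]
    refine ⟨n, ?_⟩
    calc x ^ n = z * (1 - a * x) * x ^ n := by rw [hzinv, one_mul]
    _ = z * ((1 - a * x) * x ^ n) := by rw [mul_assoc]
    _ = 0 := by rw [hxn, mul_zero]
  -- the Jacobson radical is trivial
  have hJ : Ideal.jacobson (⊥ : Ideal A) = ⊥ := by
    rw [eq_bot_iff]
    intro u hu
    rw [Submodule.mem_bot]
    apply hnondeg
    intro v
    rw [hsymm]
    exact htr0 _ (hnil _ (Ideal.mul_mem_left _ v hu))
  refine ⟨hJ, ?_⟩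
  -- find finitely many maximal left ideals with trivial intersection
  obtain ⟨N, ⟨s, hs, hNs⟩, hNmin⟩ := IsArtinian.set_has_minimal
      {I : Ideal A | ∃ s : Finset (Ideal A), (∀ m ∈ s, m.IsMaximal) ∧ I = s.inf id}
      ⟨⊤, ∅, by simp, by simp⟩
  have hNbot : N = ⊥ := by
    have hNle : ∀ m : Ideal A, m.IsMaximal → N ≤ m := by
      intro m hm
      have hmem : N ⊓ m ∈ {I : Ideal A | ∃ s : Finset (Ideal A),
          (∀ m ∈ s, m.IsMaximal) ∧ I = s.inf id} := by
        refine ⟨insert m s, ?_, ?_⟩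
        · intro m' hm'
          rcases Finset.mem_insert.mp hm' with h | h
          · rwa [h]
          · exact hs m' h
        · rw [Finset.inf_insert, hNs, id, inf_comm]
      have hlt : ¬(N ⊓ m < N) := hNmin _ hmem
      have heq : N ⊓ m = N := by
        rcases lt_or_eq_of_le (inf_le_left : N ⊓ m ≤ N) with h | h
        · exact absurd h hlt
        · exact h
      exact heq ▸ inf_le_right
    have : N ≤ Ideal.jacobson (⊥ : Ideal A) := by
      apply le_sInf
      rintro m ⟨-, hm⟩
      exact hNle m hm
    exact le_bot_iff.mp (hJ ▸ this)
  have hsinf : s.inf id = (⊥ : Ideal A) := hNs ▸ hNbot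
  -- embed A into a product of simple modules
  haveI hsimp : ∀ i : s, IsSimpleModule A (A ⧸ (i.1 : Ideal A)) := fun i =>
    isSimpleModule_iff_isCoatom.mpr (Ideal.isMaximal_def.mp (hs i.1 i.2))
  haveI hsemi : ∀ i : s, IsSemisimpleModule A (A ⧸ (i.1 : Ideal A)) := fun i =>
    inferInstance
  haveI hpi : IsSemisimpleModule A (∀ i : s, A ⧸ (i.1 : Ideal A)) := by
    refine isSemisimpleModule_of_isSemisimpleModule_submodule'
      (p := fun i : s => LinearMap.range
        (LinearMap.single A (fun j : s => A ⧸ (j.1 : Ideal A)) i)) (fun i => ?_) ?_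
    · exact IsSemisimpleModule.range _
    · simp_rw [LinearMap.range_eq_map, Submodule.iSup_map_single, Submodule.pi_top]
  let f : A →ₗ[A] (∀ i : s, A ⧸ (i.1 : Ideal A)) :=
    LinearMap.pi fun i => (i.1 : Ideal A).mkQ
  have hker : LinearMap.ker f = ⊥ := by
    rw [LinearMap.ker_pi]
    simp only [Submodule.ker_mkQ]
    rw [← hsinf, Finset.inf_eq_iInf, iInf_subtype]
    rfl
  have hinj : Function.Injective f := LinearMap.ker_eq_bot.mp hker
  have hbij : Function.Bijective f.rangeRestrict :=
    ⟨fun a b h => hinj (Subtype.ext_iff.mp h), f.surjective_rangeRestrict⟩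
  exact (LinearMap.isSemisimpleModule_iff_of_bijective (N' := LinearMap.range f) f.rangeRestrict hbij).mpr inferInstance
end

section
/- Let F be a field of characteristic p > 2, and let L₅ be the F-linear span of the five matrices E₂₃, E₃₂, E₂₂ − E₃₃, E₁₂, E₁₃ inside the 3×3 matrices over F (where E_{ij} is the elementary matrix with 1 in position (i,j) and 0 elsewhere), with Lie bracket the matrix commutator. Then L₅ is a Lie subalgebra of gl(3,F) of dimension 5, its center is trivial, and L₅ is indecomposable: for any Lie ideals I, J of L₅ with I ⊓ J = ⊥ and I ⊔ J = ⊤, either I = ⊥ or J = ⊥. -/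
set_option linter.unusedVariables false
set_option linter.unreachableTactic false
set_option linter.unusedTactic false
set_option linter.unnecessarySeqFocus false

attribute [local instance 100] LieRing.ofAssociativeRing

/-- The five-matrix span defining the Lie algebra `L₅` of Proposition 4.15:
the span of `E₂₃, E₃₂, E₂₂ - E₃₃, E₁₂, E₁₃` inside the 3×3 matrices. -/
def L5carrier (F : Type*) [Field F] : Submodule F (Matrix (Fin 3) (Fin 3) F) :=
  Submodule.span F
    {Matrix.single 1 2 (1 : F), Matrix.single 2 1 (1 : F),
      Matrix.single 1 1 (1 : F) - Matrix.single 2 2 (1 : F),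
      Matrix.single 0 1 (1 : F), Matrix.single 0 2 (1 : F)}

namespace L5aux

variable {F : Type*} [Field F]


lemma mem_L5_iff (m : Matrix (Fin 3) (Fin 3) F) :
    m ∈ L5carrier F ↔ m 0 0 = 0 ∧ m 1 0 = 0 ∧ m 2 0 = 0 ∧ m 2 2 = -(m 1 1) := by
  constructor
  · intro hm
    induction hm using Submodule.span_induction with
    | mem x hx =>
      rcases hx with h | h | h | h | h <;> subst h <;>
        simp [Matrix.single, Matrix.sub_apply]
    | zero => simp
    | add x y _ _ hx hy =>
      obtain ⟨a1, a2, a3, a4⟩ := hx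
      obtain ⟨b1, b2, b3, b4⟩ := hy
      simp [Matrix.add_apply, a1, a2, a3, a4, b1, b2, b3, b4]; ring
    | smul c x _ hx =>
      obtain ⟨a1, a2, a3, a4⟩ := hx
      simp [Matrix.smul_apply, a1, a2, a3, a4]
  · rintro ⟨h1, h2, h3, h4⟩
    have : m = m 0 1 • Matrix.single 0 1 (1 : F)
        + m 0 2 • Matrix.single 0 2 (1 : F)
        + m 1 1 • (Matrix.single 1 1 (1 : F) - Matrix.single 2 2 (1 : F))
        + m 1 2 • Matrix.single 1 2 (1 : F)
        + m 2 1 • Matrix.single 2 1 (1 : F) := by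
      ext i j
      fin_cases i <;> fin_cases j <;>
        simp [Matrix.single, Matrix.add_apply, Matrix.smul_apply, Matrix.sub_apply,
          h1, h2, h3, h4]
    rw [this]
    apply Submodule.add_mem
    apply Submodule.add_mem
    apply Submodule.add_mem
    apply Submodule.add_mem
    all_goals
      exact Submodule.smul_mem _ _ (Submodule.subset_span (by simp))

lemma bracket_closed (x y : Matrix (Fin 3) (Fin 3) F)
    (hx : x ∈ L5carrier F) (hy : y ∈ L5carrier F) : ⁅x, y⁆ ∈ L5carrier F := by
  rw [mem_L5_iff] at hx hy ⊢
  obtain ⟨a1, a2, a3, a4⟩ := hx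
  obtain ⟨b1, b2, b3, b4⟩ := hy
  refine ⟨?_, ?_, ?_, ?_⟩ <;>
    simp [Ring.lie_def, Matrix.sub_apply, Matrix.mul_apply, Fin.sum_univ_three,
      a1, a2, a3, a4, b1, b2, b3, b4] <;> ring

noncomputable def phi : Matrix (Fin 3) (Fin 3) F →ₗ[F] (Fin 4 → F) where
  toFun m := ![m 0 0, m 1 0, m 2 0, m 1 1 + m 2 2]
  map_add' x y := by
    funext i; fin_cases i <;> simp [Matrix.add_apply] <;> ring
  map_smul' c x := by
    funext i; fin_cases i <;> simp [Matrix.smul_apply] <;> ring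

lemma L5_eq_ker : L5carrier F = LinearMap.ker (phi (F := F)) := by
  ext m
  rw [mem_L5_iff, LinearMap.mem_ker]
  constructor
  · rintro ⟨h1, h2, h3, h4⟩
    funext i; fin_cases i <;> simp [phi, h1, h2, h3, h4]
  · intro h
    refine ⟨congrFun h 0, congrFun h 1, congrFun h 2, ?_⟩
    have := congrFun h 3
    simp [phi] at this
    linear_combination this

lemma finrank_L5 : Module.finrank F (L5carrier F) = 5 := by
  have hsurj : Function.Surjective (phi (F := F)) := by
    intro v
    refine ⟨v 0 • Matrix.single 0 0 (1:F) + v 1 • Matrix.single 1 0 (1:F)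
      + v 2 • Matrix.single 2 0 (1:F) + v 3 • Matrix.single 1 1 (1:F), ?_⟩
    have hphi : ∀ m : Matrix (Fin 3) (Fin 3) F,
        phi m = ![m 0 0, m 1 0, m 2 0, m 1 1 + m 2 2] := fun _ => rfl
    funext i; fin_cases i <;>
      simp [hphi, Matrix.single, Matrix.of_apply, Matrix.add_apply, Matrix.smul_apply]
  have h9 : Module.finrank F (Matrix (Fin 3) (Fin 3) F) = 9 := by
    simp [Module.finrank_matrix]
  have := LinearMap.finrank_range_add_finrank_ker (phi (F := F))
  rw [LinearMap.range_eq_top.mpr hsurj, finrank_top] at this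
  have h4 : Module.finrank F (Fin 4 → F) = 4 := by simp
  rw [L5_eq_ker]
  omega

-- abbreviations for generator matrices
noncomputable def C (F : Type*) [Field F] : Matrix (Fin 3) (Fin 3) F := Matrix.single 0 1 1
noncomputable def D (F : Type*) [Field F] : Matrix (Fin 3) (Fin 3) F := Matrix.single 0 2 1
noncomputable def Hm (F : Type*) [Field F] : Matrix (Fin 3) (Fin 3) F :=
  Matrix.single 1 1 1 - Matrix.single 2 2 1
noncomputable def E12 (F : Type*) [Field F] : Matrix (Fin 3) (Fin 3) F := Matrix.single 1 2 1
noncomputable def E21 (F : Type*) [Field F] : Matrix (Fin 3) (Fin 3) F := Matrix.single 2 1 1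

lemma memC : C F ∈ L5carrier F := by
  rw [mem_L5_iff]; simp [C, Matrix.single]
lemma memD : D F ∈ L5carrier F := by
  rw [mem_L5_iff]; simp [D, Matrix.single]
lemma memH : Hm F ∈ L5carrier F := by
  rw [mem_L5_iff]; simp [Hm, Matrix.single, Matrix.sub_apply]
lemma memE12 : E12 F ∈ L5carrier F := by
  rw [mem_L5_iff]; simp [E12, Matrix.single]
lemma memE21 : E21 F ∈ L5carrier F := by
  rw [mem_L5_iff]; simp [E21, Matrix.single]

-- bracket computations
lemma brHCD (α β : F) : ⁅Hm F, α • C F + β • D F⁆ = -α • C F + β • D F := by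
  ext i j
  fin_cases i <;> fin_cases j <;>
    simp [Hm, C, D, Ring.lie_def, Matrix.single, Matrix.mul_apply, Fin.sum_univ_three,
      Matrix.add_apply, Matrix.sub_apply, Matrix.smul_apply] <;> ring

lemma brE12C : ⁅E12 F, C F⁆ = -(D F) := by
  ext i j
  fin_cases i <;> fin_cases j <;>
    simp [E12, C, D, Ring.lie_def, Matrix.single, Matrix.mul_apply, Fin.sum_univ_three,
      Matrix.sub_apply, Matrix.neg_apply]

lemma brE21D : ⁅E21 F, D F⁆ = -(C F) := by
  ext i j
  fin_cases i <;> fin_cases j <;>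
    simp [E21, C, D, Ring.lie_def, Matrix.single, Matrix.mul_apply, Fin.sum_univ_three,
      Matrix.sub_apply, Matrix.neg_apply]

lemma brC (m : Matrix (Fin 3) (Fin 3) F)
    (h1 : m 0 0 = 0) (h2 : m 1 0 = 0) (h3 : m 2 0 = 0) (h4 : m 2 2 = -(m 1 1)) :
    ⁅C F, m⁆ = m 1 1 • C F + m 1 2 • D F := by
  ext i j
  fin_cases i <;> fin_cases j <;>
    simp [C, D, Ring.lie_def, Matrix.single, Matrix.mul_apply, Fin.sum_univ_three,
      Matrix.sub_apply, Matrix.add_apply, Matrix.smul_apply, h1, h2, h3, h4]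

lemma brD (m : Matrix (Fin 3) (Fin 3) F)
    (h1 : m 0 0 = 0) (h2 : m 1 0 = 0) (h3 : m 2 0 = 0) (h4 : m 2 2 = -(m 1 1)) :
    ⁅D F, m⁆ = m 2 1 • C F + (-(m 1 1)) • D F := by
  ext i j
  fin_cases i <;> fin_cases j <;>
    simp [C, D, Ring.lie_def, Matrix.single, Matrix.mul_apply, Fin.sum_univ_three,
      Matrix.sub_apply, Matrix.add_apply, Matrix.smul_apply, h1, h2, h3, h4]


lemma brHm01 (m : Matrix (Fin 3) (Fin 3) F) : ⁅Hm F, m⁆ 0 1 = -(m 0 1) := by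
  simp [Hm, Ring.lie_def, Matrix.single, Matrix.mul_apply, Fin.sum_univ_three,
    Matrix.sub_apply]

lemma brHm02 (m : Matrix (Fin 3) (Fin 3) F) : ⁅Hm F, m⁆ 0 2 = m 0 2 := by
  simp [Hm, Ring.lie_def, Matrix.single, Matrix.mul_apply, Fin.sum_univ_three,
    Matrix.sub_apply]

lemma brHm12 (m : Matrix (Fin 3) (Fin 3) F) : ⁅Hm F, m⁆ 1 2 = m 1 2 + m 1 2 := by
  simp [Hm, Ring.lie_def, Matrix.single, Matrix.mul_apply, Fin.sum_univ_three,
    Matrix.sub_apply]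

lemma brHm21 (m : Matrix (Fin 3) (Fin 3) F) : ⁅Hm F, m⁆ 2 1 = -(m 2 1 + m 2 1) := by
  simp [Hm, Ring.lie_def, Matrix.single, Matrix.mul_apply, Fin.sum_univ_three,
    Matrix.sub_apply]
  ring

lemma brE12m (m : Matrix (Fin 3) (Fin 3) F) :
    ⁅E12 F, m⁆ 1 2 = m 2 2 - m 1 1 := by
  simp [E12, Ring.lie_def, Matrix.single, Matrix.mul_apply, Fin.sum_univ_three,
    Matrix.sub_apply]

variable {L₅ : LieSubalgebra F (Matrix (Fin 3) (Fin 3) F)}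

lemma center_bot (two_ne : (2:F) ≠ 0)
    (hL : (L₅ : Submodule F (Matrix (Fin 3) (Fin 3) F)) = L5carrier F) :
    LieAlgebra.center F L₅ = ⊥ := by
  have twice : ∀ a : F, a + a = 0 → a = 0 := by
    intro a ha
    have h2a : (2:F) * a = 0 := by linear_combination ha
    exact (mul_eq_zero.mp h2a).resolve_left two_ne
  rw [eq_bot_iff]
  intro z hz
  rw [LieSubmodule.mem_bot]
  have hz' : ∀ x : L₅, ⁅x, z⁆ = 0 := (LieModule.mem_maxTrivSubmodule F L₅ L₅ z).mp hz
  have hmem : ∀ m : Matrix (Fin 3) (Fin 3) F, m ∈ L5carrier F → m ∈ L₅ := by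
    intro m hm
    rw [← LieSubalgebra.mem_toSubmodule, hL]; exact hm
  have hzm : (z : Matrix (Fin 3) (Fin 3) F) ∈ L5carrier F := by
    rw [← hL]; exact z.2
  rw [mem_L5_iff] at hzm
  obtain ⟨h1, h2, h3, h4⟩ := hzm
  have e1 : ⁅Hm F, (z : Matrix (Fin 3) (Fin 3) F)⁆ = 0 :=
    congrArg Subtype.val (hz' ⟨Hm F, hmem _ memH⟩)
  have e2 : ⁅E12 F, (z : Matrix (Fin 3) (Fin 3) F)⁆ = 0 :=
    congrArg Subtype.val (hz' ⟨E12 F, hmem _ memE12⟩)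
  have q1 := fun (i j : Fin 3) => congrFun (congrFun e1 i) j
  have k11 : (z : Matrix (Fin 3) (Fin 3) F) 1 1 = 0 := by
    apply twice
    have := congrFun (congrFun e2 1) 2
    rw [brE12m, h4] at this
    simp only [Matrix.zero_apply] at this
    linear_combination -this
  have k01 : (z : Matrix (Fin 3) (Fin 3) F) 0 1 = 0 := by
    have := q1 0 1
    rw [brHm01] at this
    simp only [Matrix.zero_apply] at this
    linear_combination -this
  have k02 : (z : Matrix (Fin 3) (Fin 3) F) 0 2 = 0 := by
    have := q1 0 2
    rw [brHm02] at this
    simpa using this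
  have k12 : (z : Matrix (Fin 3) (Fin 3) F) 1 2 = 0 := by
    apply twice
    have := q1 1 2
    rw [brHm12] at this
    simpa using this
  have k21 : (z : Matrix (Fin 3) (Fin 3) F) 2 1 = 0 := by
    apply twice
    have := q1 2 1
    rw [brHm21] at this
    simp only [Matrix.zero_apply] at this
    linear_combination -this
  have k22 : (z : Matrix (Fin 3) (Fin 3) F) 2 2 = 0 := by rw [h4, k11, neg_zero]
  ext i j
  fin_cases i <;> fin_cases j <;>
    simp [h1, h2, h3, k01, k02, k11, k12, k21, k22]

lemma stepV (two_ne : (2:F) ≠ 0)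
    (hL : (L₅ : Submodule F (Matrix (Fin 3) (Fin 3) F)) = L5carrier F)
    (I : LieIdeal F L₅) (v : L₅) (hv : v ∈ I) (α β : F)
    (hval : (v : Matrix (Fin 3) (Fin 3) F) = α • C F + β • D F)
    (hne : α ≠ 0 ∨ β ≠ 0) :
    ∀ x : L₅, ((x : Matrix (Fin 3) (Fin 3) F) = C F ∨
      (x : Matrix (Fin 3) (Fin 3) F) = D F) → x ∈ I := by
  have hmem : ∀ m : Matrix (Fin 3) (Fin 3) F, m ∈ L5carrier F → m ∈ L₅ := by
    intro m hm
    rw [← LieSubalgebra.mem_toSubmodule, hL]; exact hm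
  set hh : L₅ := ⟨Hm F, hmem _ memH⟩ with hhdef
  set e12 : L₅ := ⟨E12 F, hmem _ memE12⟩ with e12def
  set e21 : L₅ := ⟨E21 F, hmem _ memE21⟩ with e21def
  have hw : ⁅hh, v⁆ ∈ I := I.lie_mem hv
  have hwval : ((⁅hh, v⁆ : L₅) : Matrix (Fin 3) (Fin 3) F) = -α • C F + β • D F := by
    rw [LieSubalgebra.coe_bracket, hhdef, hval]
    exact brHCD α β
  -- the two key claims
  have hCD : (∀ x : L₅, (x : Matrix (Fin 3) (Fin 3) F) = C F → x ∈ I) ∧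
      (∀ x : L₅, (x : Matrix (Fin 3) (Fin 3) F) = D F → x ∈ I) := by
    rcases hne with hα | hβ
    · have hu : (2*α)⁻¹ • (v - ⁅hh, v⁆) ∈ I :=
        Submodule.smul_mem _ _ (Submodule.sub_mem _ hv hw)
      have huval : (((2*α)⁻¹ • (v - ⁅hh, v⁆) : L₅) : Matrix (Fin 3) (Fin 3) F) = C F := by
        show (2*α)⁻¹ • ((v : Matrix (Fin 3) (Fin 3) F)
          - ((⁅hh, v⁆ : L₅) : Matrix (Fin 3) (Fin 3) F)) = C F
        rw [hval, hwval]
        ext i j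
        simp [Matrix.add_apply, Matrix.sub_apply, Matrix.smul_apply, smul_eq_mul]
        field_simp
        ring
      have hc : ∀ x : L₅, (x : Matrix (Fin 3) (Fin 3) F) = C F → x ∈ I := by
        intro x hx
        have : x = (2*α)⁻¹ • (v - ⁅hh, v⁆) := Subtype.ext (by rw [hx, huval])
        rw [this]; exact hu
      refine ⟨hc, ?_⟩
      intro x hx
      have hcI : (⟨C F, hmem _ memC⟩ : L₅) ∈ I := hc _ rfl
      have hb : -⁅e12, (⟨C F, hmem _ memC⟩ : L₅)⁆ ∈ I :=
        Submodule.neg_mem _ (I.lie_mem hcI)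
      have : x = -⁅e12, (⟨C F, hmem _ memC⟩ : L₅)⁆ := by
        apply Subtype.ext
        push_cast
        rw [hx, brE12C, neg_neg]
      rw [this]; exact hb
    · have hu : (2*β)⁻¹ • (v + ⁅hh, v⁆) ∈ I :=
        Submodule.smul_mem _ _ (Submodule.add_mem _ hv hw)
      have huval : (((2*β)⁻¹ • (v + ⁅hh, v⁆) : L₅) : Matrix (Fin 3) (Fin 3) F) = D F := by
        show (2*β)⁻¹ • ((v : Matrix (Fin 3) (Fin 3) F)
          + ((⁅hh, v⁆ : L₅) : Matrix (Fin 3) (Fin 3) F)) = D F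
        rw [hval, hwval]
        ext i j
        simp [Matrix.add_apply, Matrix.smul_apply, smul_eq_mul]
        field_simp
        ring
      have hd : ∀ x : L₅, (x : Matrix (Fin 3) (Fin 3) F) = D F → x ∈ I := by
        intro x hx
        have : x = (2*β)⁻¹ • (v + ⁅hh, v⁆) := Subtype.ext (by rw [hx, huval])
        rw [this]; exact hu
      refine ⟨?_, hd⟩
      intro x hx
      have hdI : (⟨D F, hmem _ memD⟩ : L₅) ∈ I := hd _ rfl
      have hb : -⁅e21, (⟨D F, hmem _ memD⟩ : L₅)⁆ ∈ I :=
        Submodule.neg_mem _ (I.lie_mem hdI)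
      have : x = -⁅e21, (⟨D F, hmem _ memD⟩ : L₅)⁆ := by
        apply Subtype.ext
        push_cast
        rw [hx, brE21D, neg_neg]
      rw [this]; exact hb
  rintro x (hx | hx)
  · exact hCD.1 x hx
  · exact hCD.2 x hx

lemma ideal_contains (two_ne : (2:F) ≠ 0)
    (hL : (L₅ : Submodule F (Matrix (Fin 3) (Fin 3) F)) = L5carrier F)
    (I : LieIdeal F L₅) (hI : I ≠ ⊥) :
    ∀ x : L₅, ((x : Matrix (Fin 3) (Fin 3) F) = C F ∨
      (x : Matrix (Fin 3) (Fin 3) F) = D F) → x ∈ I := by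
  have hmem : ∀ m : Matrix (Fin 3) (Fin 3) F, m ∈ L5carrier F → m ∈ L₅ := by
    intro m hm
    rw [← LieSubalgebra.mem_toSubmodule, hL]; exact hm
  obtain ⟨y, hyI, hy0⟩ : ∃ y ∈ I, y ≠ 0 := by
    by_contra h
    push_neg at h
    exact hI ((LieSubmodule.eq_bot_iff I).mpr h)
  have hym : (y : Matrix (Fin 3) (Fin 3) F) ∈ L5carrier F := by
    rw [← hL]; exact y.2
  rw [mem_L5_iff] at hym
  obtain ⟨h1, h2, h3, h4⟩ := hym
  set e01 : L₅ := ⟨C F, hmem _ memC⟩ with e01def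
  set e02 : L₅ := ⟨D F, hmem _ memD⟩ with e02def
  have hy1 : ⁅e01, y⁆ ∈ I := I.lie_mem hyI
  have hy2 : ⁅e02, y⁆ ∈ I := I.lie_mem hyI
  have hy1val : ((⁅e01, y⁆ : L₅) : Matrix (Fin 3) (Fin 3) F)
      = (y : Matrix (Fin 3) (Fin 3) F) 1 1 • C F
        + (y : Matrix (Fin 3) (Fin 3) F) 1 2 • D F := by
    rw [LieSubalgebra.coe_bracket, e01def]
    exact brC _ h1 h2 h3 h4
  have hy2val : ((⁅e02, y⁆ : L₅) : Matrix (Fin 3) (Fin 3) F)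
      = (y : Matrix (Fin 3) (Fin 3) F) 2 1 • C F
        + (-((y : Matrix (Fin 3) (Fin 3) F) 1 1)) • D F := by
    rw [LieSubalgebra.coe_bracket, e02def]
    exact brD _ h1 h2 h3 h4
  by_cases h11 : (y : Matrix (Fin 3) (Fin 3) F) 1 1 = 0
  · by_cases h12 : (y : Matrix (Fin 3) (Fin 3) F) 1 2 = 0
    · by_cases h21 : (y : Matrix (Fin 3) (Fin 3) F) 2 1 = 0
      · have h22 : (y : Matrix (Fin 3) (Fin 3) F) 2 2 = 0 := by rw [h4, h11, neg_zero]
        have hval : (y : Matrix (Fin 3) (Fin 3) F)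
            = (y : Matrix (Fin 3) (Fin 3) F) 0 1 • C F
              + (y : Matrix (Fin 3) (Fin 3) F) 0 2 • D F := by
          ext i j
          fin_cases i <;> fin_cases j <;>
            simp [C, D, Matrix.single, Matrix.add_apply, Matrix.smul_apply,
              h1, h2, h3, h11, h12, h21, h22]
        have hne : (y : Matrix (Fin 3) (Fin 3) F) 0 1 ≠ 0 ∨
            (y : Matrix (Fin 3) (Fin 3) F) 0 2 ≠ 0 := by
          by_contra h
          push_neg at h
          apply hy0
          apply Subtype.ext
          rw [hval, h.1, h.2]
          simp
        exact stepV two_ne hL I y hyI _ _ hval hne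
      · exact stepV two_ne hL I _ hy2 _ _ hy2val (Or.inl h21)
    · exact stepV two_ne hL I _ hy1 _ _ hy1val (Or.inr h12)
  · exact stepV two_ne hL I _ hy1 _ _ hy1val (Or.inl h11)

lemma indecomp (two_ne : (2:F) ≠ 0)
    (hL : (L₅ : Submodule F (Matrix (Fin 3) (Fin 3) F)) = L5carrier F)
    (I J : LieIdeal F L₅) (hIJ : I ⊓ J = ⊥) (_ : I ⊔ J = ⊤) : I = ⊥ ∨ J = ⊥ := by
  have hmem : ∀ m : Matrix (Fin 3) (Fin 3) F, m ∈ L5carrier F → m ∈ L₅ := by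
    intro m hm
    rw [← LieSubalgebra.mem_toSubmodule, hL]; exact hm
  by_contra h
  push_neg at h
  obtain ⟨hI, hJ⟩ := h
  set e01 : L₅ := ⟨C F, hmem _ memC⟩ with e01def
  have hin : e01 ∈ I ⊓ J :=
    ⟨ideal_contains two_ne hL I hI e01 (Or.inl rfl),
     ideal_contains two_ne hL J hJ e01 (Or.inl rfl)⟩
  rw [hIJ, LieSubmodule.mem_bot] at hin
  have : (C F : Matrix (Fin 3) (Fin 3) F) 0 1 = 0 := by
    rw [show (C F : Matrix (Fin 3) (Fin 3) F) = ((0 : L₅) : Matrix (Fin 3) (Fin 3) F) from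
      by rw [← hin]]
    simp
  simp [C, Matrix.single] at this

end L5aux

open L5aux in
/-- Proposition 4.15 (expressible part): over a field of characteristic
`p > 2`, the span `L₅` of `E₂₃, E₃₂, E₂₂ − E₃₃, E₁₂, E₁₃` in `gl(3,F)` is
closed under the matrix commutator bracket, and any Lie subalgebra of
`gl(3,F)` with this carrier has dimension 5, trivial center, and is
indecomposable. -/
theorem L5_centerless_indecomposable {F : Type*} [Field F] (p : ℕ)
    [CharP F p] (hp : 2 < p) :
    (∀ x y : Matrix (Fin 3) (Fin 3) F,
        x ∈ L5carrier F → y ∈ L5carrier F → ⁅x, y⁆ ∈ L5carrier F) ∧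
    ∀ L₅ : LieSubalgebra F (Matrix (Fin 3) (Fin 3) F),
      (L₅ : Submodule F (Matrix (Fin 3) (Fin 3) F)) = L5carrier F →
        Module.finrank F L₅ = 5 ∧
        LieAlgebra.center F L₅ = ⊥ ∧
        (∀ I J : LieIdeal F L₅, I ⊓ J = ⊥ → I ⊔ J = ⊤ → I = ⊥ ∨ J = ⊥) := by
  have two_ne : (2:F) ≠ 0 := by
    have hnd : ¬ (p ∣ 2) := fun hd => by
      have := Nat.le_of_dvd (by norm_num) hd
      omega
    intro h2
    exact hnd ((CharP.cast_eq_zero_iff F p 2).mp (by exact_mod_cast h2))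
  refine ⟨bracket_closed, ?_⟩
  intro L₅ hL
  refine ⟨?_, center_bot two_ne hL, indecomp two_ne hL⟩
  have : Module.finrank F (L₅ : Submodule F (Matrix (Fin 3) (Fin 3) F)) = 5 := by
    rw [hL]; exact finrank_L5
  exact this
end
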